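/- arXiv:1011.5920 — 2 statements merged into one kernel-verified Lean document; each statement's English description precedes it below -/
import Mathlib

section
/- Theorem 1, sharpness: Let 0 < X ≤ Y, let D = {p : E² | p 0 ∈ [0,X] ∧ p 1 ∈ [0,Y]}, and let S = {p : E² | p 0 ∈ [0,X] ∧ p 1 ∈ [0, Y/2]} be the lower half-rectangle obtained by a cut parallel to the side of length X. Then S is compact, connected and regular closed, volume S = X·Y/2, and its free perimeter relative to D equals X: μH[1](frontier S \ frontier D) = X. Consequently the minimum free perimeter of a half-area shape in the rectangle is exactly X. -/
open MeasureTheory Set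

noncomputable def e2h : EuclideanSpace ℝ (Fin 2) ≃ₜ (Fin 2 → ℝ) :=
  (EuclideanSpace.equiv (Fin 2) ℝ).toHomeomorph

lemma rect_eq (a b : ℝ) :
    {p : EuclideanSpace ℝ (Fin 2) | p 0 ∈ Set.Icc 0 a ∧ p 1 ∈ Set.Icc 0 b} =
      e2h ⁻¹' (Set.univ.pi fun i => Set.Icc 0 (if i = 0 then a else b)) := by
  ext p
  simp only [mem_setOf_eq, mem_preimage, mem_pi, mem_univ, true_implies, Fin.forall_fin_two, mem_Icc]
  simp [e2h]

lemma interior_rect (a b : ℝ) :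
    interior {p : EuclideanSpace ℝ (Fin 2) | p 0 ∈ Set.Icc 0 a ∧ p 1 ∈ Set.Icc 0 b} =
      {p : EuclideanSpace ℝ (Fin 2) | p 0 ∈ Set.Ioo 0 a ∧ p 1 ∈ Set.Ioo 0 b} := by
  rw [rect_eq, ← Homeomorph.preimage_interior, interior_pi_set finite_univ]
  ext p
  simp only [mem_preimage, mem_pi, mem_univ, true_implies, Fin.forall_fin_two, interior_Icc,
    mem_Ioo, mem_setOf_eq]
  simp [e2h]

lemma compact_rect (a b : ℝ) :
    IsCompact {p : EuclideanSpace ℝ (Fin 2) | p 0 ∈ Set.Icc 0 a ∧ p 1 ∈ Set.Icc 0 b} := by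
  rw [rect_eq]
  exact e2h.isCompact_preimage.2 (isCompact_univ_pi fun i => isCompact_Icc)

lemma closure_open_rect (a b : ℝ) (ha : 0 < a) (hb : 0 < b) :
    closure {p : EuclideanSpace ℝ (Fin 2) | p 0 ∈ Set.Ioo 0 a ∧ p 1 ∈ Set.Ioo 0 b} =
      {p : EuclideanSpace ℝ (Fin 2) | p 0 ∈ Set.Icc 0 a ∧ p 1 ∈ Set.Icc 0 b} := by
  have h : {p : EuclideanSpace ℝ (Fin 2) | p 0 ∈ Set.Ioo 0 a ∧ p 1 ∈ Set.Ioo 0 b} =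
      e2h ⁻¹' (Set.univ.pi fun i => Set.Ioo 0 (if i = 0 then a else b)) := by
    ext p
    simp only [mem_setOf_eq, mem_preimage, mem_pi, mem_univ, true_implies, Fin.forall_fin_two,
      mem_Ioo]
    simp [e2h]
  rw [h, ← Homeomorph.preimage_closure, closure_pi_set, rect_eq]
  have : (fun i : Fin 2 => closure (Set.Ioo (0:ℝ) (if i = 0 then a else b))) =
      fun i => Set.Icc 0 (if i = 0 then a else b) := by
    funext i
    split
    · rw [closure_Ioo ha.ne]
    · rw [closure_Ioo hb.ne]
  rw [this]

lemma convex_rect (a b : ℝ) :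
    Convex ℝ {p : EuclideanSpace ℝ (Fin 2) | p 0 ∈ Set.Icc 0 a ∧ p 1 ∈ Set.Icc 0 b} := by
  intro x hx y hy s t hs ht hst
  refine ⟨?_, ?_⟩
  · have := (convex_Icc (0:ℝ) a) hx.1 hy.1 hs ht hst
    simpa using this
  · have := (convex_Icc (0:ℝ) b) hx.2 hy.2 hs ht hst
    simpa using this

lemma volume_rect (a b : ℝ) :
    volume {p : EuclideanSpace ℝ (Fin 2) | p 0 ∈ Set.Icc 0 a ∧ p 1 ∈ Set.Icc 0 b} =
      ENNReal.ofReal a * ENNReal.ofReal b := by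
  have hset : {p : EuclideanSpace ℝ (Fin 2) | p 0 ∈ Set.Icc 0 a ∧ p 1 ∈ Set.Icc 0 b} =
      (MeasurableEquiv.toLp 2 (Fin 2 → ℝ)).symm ⁻¹'
        (Set.univ.pi fun i => Set.Icc 0 (if i = 0 then a else b)) := by
    ext p
    simp only [mem_setOf_eq, mem_preimage, mem_pi, mem_univ, true_implies, Fin.forall_fin_two,
      mem_Icc]
    constructor
    · rintro ⟨h1, h2⟩; exact ⟨by simpa using h1, by simpa using h2⟩
    · rintro ⟨h1, h2⟩; exact ⟨by simpa using h1, by simpa using h2⟩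
  rw [hset, (EuclideanSpace.volume_preserving_symm_measurableEquiv_toLp (Fin 2)).measure_preimage
    (MeasurableSet.univ_pi fun i => measurableSet_Icc).nullMeasurableSet,
    volume_pi_pi, Fin.prod_univ_two]
  simp [Real.volume_Icc]

noncomputable def segMap (c : ℝ) : ℝ → EuclideanSpace ℝ (Fin 2) :=
  fun t => (EuclideanSpace.equiv (Fin 2) ℝ).symm (fun i => if i = 0 then t else c)

lemma seg_isometry (c : ℝ) : Isometry (segMap c) := by
  apply Isometry.of_dist_eq
  intro s t
  rw [EuclideanSpace.dist_eq, Fin.sum_univ_two]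
  have h0 : ∀ u, segMap c u 0 = u := fun u => rfl
  have h1 : ∀ u, segMap c u 1 = c := fun u => rfl
  rw [h0, h0, h1, h1]
  simp [Real.dist_eq, Real.sqrt_sq_eq_abs]

lemma seg_measure (c a : ℝ) : μH[1] (segMap c '' Set.Ioo 0 a) = ENNReal.ofReal a := by
  rw [(seg_isometry c).hausdorffMeasure_image (Or.inl zero_le_one),
    MeasureTheory.hausdorffMeasure_real, Real.volume_Ioo, sub_zero]

/-- **Theorem 1, sharpness.**
Let `0 < X ≤ Y`, `D` the closed `X × Y` rectangle, and `S` the lower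
half-rectangle obtained by a cut parallel to the side of length `X`.  Then `S`
is compact, connected and regular closed, has area `X·Y/2`, and its free
perimeter relative to `D` equals `X`; hence the minimum free perimeter of a
half-area shape in the rectangle is exactly `X`. -/
theorem half_area_free_perimeter_sharp
    (X Y : ℝ) (hX : 0 < X) (hXY : X ≤ Y)
    (D S : Set (EuclideanSpace ℝ (Fin 2)))
    (hD : D = {p : EuclideanSpace ℝ (Fin 2) | p 0 ∈ Set.Icc 0 X ∧ p 1 ∈ Set.Icc 0 Y})
    (hS : S = {p : EuclideanSpace ℝ (Fin 2) | p 0 ∈ Set.Icc 0 X ∧ p 1 ∈ Set.Icc 0 (Y / 2)}) :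
    IsCompact S ∧ IsConnected S ∧ S = closure (interior S) ∧
      volume S = ENNReal.ofReal (X * Y / 2) ∧
      μH[1] (frontier S \ frontier D) = ENNReal.ofReal X := by
  have hY : 0 < Y := lt_of_lt_of_le hX hXY
  have hY2 : 0 < Y / 2 := by linarith
  have hcS : IsCompact S := hS ▸ compact_rect X (Y / 2)
  have hcD : IsCompact D := hD ▸ compact_rect X Y
  refine ⟨hcS, ?_, ?_, ?_, ?_⟩
  · -- connected
    refine ⟨⟨0, ?_⟩, (hS ▸ convex_rect X (Y / 2)).isPreconnected⟩
    rw [hS]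
    exact ⟨⟨le_refl _, hX.le⟩, ⟨le_refl _, hY2.le⟩⟩
  · -- regular closed
    rw [hS, interior_rect, closure_open_rect X (Y / 2) hX hY2]
  · -- volume
    rw [hS, volume_rect, ← ENNReal.ofReal_mul hX.le]
    ring_nf
  · -- free perimeter
    have hfS : frontier S = S \ interior S := hcS.isClosed.frontier_eq
    have hfD : frontier D = D \ interior D := hcD.isClosed.frontier_eq
    have key : frontier S \ frontier D = segMap (Y / 2) '' Set.Ioo 0 X := by
      rw [hfS, hfD, hS, hD, interior_rect, interior_rect]
      ext p
      simp only [mem_diff, mem_setOf_eq, mem_Icc, mem_Ioo, mem_image, not_and, not_not,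
        Classical.not_imp, not_lt, not_le]
      constructor
      · rintro ⟨⟨⟨⟨h1, h2⟩, h3, h4⟩, h5⟩, h6⟩
        have hpD : (0 ≤ p 0 ∧ p 0 ≤ X) ∧ 0 ≤ p 1 ∧ p 1 ≤ Y := ⟨⟨h1, h2⟩, h3, by linarith⟩
        have hint : (0 < p 0 ∧ p 0 < X) ∧ 0 < p 1 ∧ p 1 < Y := h6 hpD
        have hp1 : p 1 = Y / 2 := le_antisymm h4 (h5 hint.1 hint.2.1)
        refine ⟨p 0, hint.1, ?_⟩
        ext i
        fin_cases i
        · rfl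
        · exact hp1.symm
      · rintro ⟨t, ⟨ht0, htX⟩, rfl⟩
        have h0 : segMap (Y / 2) t 0 = t := rfl
        have h1 : segMap (Y / 2) t 1 = Y / 2 := rfl
        rw [h0, h1]
        exact ⟨⟨⟨⟨ht0.le, htX.le⟩, hY2.le, le_refl _⟩, fun _ _ => le_refl _⟩,
          fun _ => ⟨⟨ht0, htX⟩, hY2, by linarith⟩⟩
    rw [key, seg_measure]
end

section
/- Theorem 2, sharpness: Let 0 < X ≤ Y and let D = {p : E² | p 0 ∈ [0,X] ∧ p 1 ∈ [0,Y]}. For every real A with 0 < A ≤ X·Y/2 there exists a compact, connected, regular closed set S ⊆ D with volume S = A whose free perimeter relative to D equals min X (√(π·A)): μH[1](frontier S \ frontier D) = min X (√(π·A)). (For A ≥ X²/π a rectangular strip of width A/X achieves X; for A ≤ X²/π a quarter disc of radius 2√(A/π) at a corner achieves √(π·A).) -/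
open MeasureTheory Set Metric Real Filter
open scoped NNReal ENNReal Topology

noncomputable section
namespace FP

abbrev E2 := EuclideanSpace ℝ (Fin 2)

def pt (a b : ℝ) : E2 := WithLp.toLp 2 ![a, b]

@[simp] lemma pt0 (a b : ℝ) : pt a b 0 = a := rfl
@[simp] lemma pt1 (a b : ℝ) : pt a b 1 = b := rfl

lemma pt_eta (p : E2) : p = pt (p 0) (p 1) := by
  ext i; fin_cases i <;> rfl

def He : E2 ≃ₜ ℝ × ℝ :=
  (EuclideanSpace.equiv (Fin 2) ℝ).toHomeomorph.trans (Homeomorph.piFinTwo fun _ => ℝ)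

@[simp] lemma He_apply (p : E2) : He p = (p 0, p 1) := rfl

lemma He_preimage (s : Set (ℝ × ℝ)) : He ⁻¹' s = {p : E2 | (p 0, p 1) ∈ s} := rfl

lemma norm_eq (p : E2) : ‖p‖ = Real.sqrt (p 0 ^ 2 + p 1 ^ 2) := by
  rw [EuclideanSpace.norm_eq, Fin.sum_univ_two]; simp [sq_abs]

lemma dist_eq (p q : E2) : dist p q = Real.sqrt ((p 0 - q 0) ^ 2 + (p 1 - q 1) ^ 2) := by
  rw [EuclideanSpace.dist_eq, Fin.sum_univ_two]; simp [Real.dist_eq, sq_abs]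

lemma smul_add_coord (a b : ℝ) (x y : E2) (i : Fin 2) :
    (a • x + b • y) i = a * x i + b * y i := by
  simp [PiLp.add_apply, PiLp.smul_apply, smul_eq_mul]

/-- Lower bound for 1-dimensional Hausdorff measure of a connected set. -/
lemma ofReal_dist_le_hausdorff {s : Set E2} (hs : IsPreconnected s) {x y : E2}
    (hx : x ∈ s) (hy : y ∈ s) : ENNReal.ofReal (dist x y) ≤ μH[1] s := by
  rcases eq_or_ne x y with rfl | hne
  · simp
  set v : E2 := y - x with hv
  have hvne : ‖v‖ ≠ 0 := by
    simpa [hv, sub_eq_zero] using fun h => hne h.symm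
  have hvpos : 0 < ‖v‖ := lt_of_le_of_ne (norm_nonneg _) (Ne.symm hvne)
  set g : E2 → ℝ := fun z => (inner ℝ z v : ℝ) / ‖v‖ with hg
  have hlip : LipschitzWith 1 g := by
    refine LipschitzWith.of_dist_le_mul fun a b => ?_
    have : g a - g b = (inner ℝ (a - b) v : ℝ) / ‖v‖ := by
      rw [hg]; simp [inner_sub_left, sub_div]
    rw [Real.dist_eq, this]
    rw [abs_div, abs_of_pos hvpos, div_le_iff₀ hvpos]
    calc |(inner ℝ (a - b) v : ℝ)| ≤ ‖a - b‖ * ‖v‖ := abs_real_inner_le_norm _ _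
      _ = 1 * dist a b * ‖v‖ := by rw [one_mul, dist_eq_norm]
  have himg := hlip.hausdorffMeasure_image_le (zero_le_one (α := ℝ)) s
  have hconn : IsPreconnected (g '' s) := hs.image g hlip.continuous.continuousOn
  have hIcc : Icc (g x) (g y) ⊆ g '' s := hconn.Icc_subset ⟨x, hx, rfl⟩ ⟨y, hy, rfl⟩
  have hgyx : g y - g x = dist x y := by
    have h1 : g y - g x = (inner ℝ v v : ℝ) / ‖v‖ := by
      rw [hg]; simp only [← sub_div, ← inner_sub_left, hv]
    rw [h1, real_inner_self_eq_norm_mul_norm, mul_div_assoc, div_self hvne, mul_one]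
    show ‖y - x‖ = dist x y
    rw [dist_eq_norm, norm_sub_rev]
  calc ENNReal.ofReal (dist x y) = μH[1] (Icc (g x) (g y)) := by
        rw [hausdorffMeasure_real, Real.volume_Icc, hgyx]
    _ ≤ μH[1] (g '' s) := measure_mono hIcc
    _ ≤ ((1 : ℝ≥0) : ℝ≥0∞) ^ (1:ℝ) * μH[1] s := himg
    _ = μH[1] s := by simp

instance : NullSingletonClass (μH[1] : Measure E2) := Measure.nullSingletonClass_hausdorff E2 one_pos

lemma hausdorff_open_horiz (X h : ℝ) (hX : 0 < X) :
    μH[1] {p : E2 | p 0 ∈ Ioo 0 X ∧ p 1 = h} = ENNReal.ofReal X := by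
  set T : Set E2 := {p : E2 | p 0 ∈ Ioo 0 X ∧ p 1 = h} with hT
  have hseg : segment ℝ (pt 0 h) (pt X h) = {p : E2 | p 0 ∈ Icc 0 X ∧ p 1 = h} := by
    rw [segment_eq_image]
    ext p
    constructor
    · rintro ⟨t, ht, rfl⟩
      constructor
      · show ((1 - t) • pt 0 h + t • pt X h) 0 ∈ Icc 0 X
        have h0 : ((1 - t) • pt 0 h + t • pt X h) 0 = t * X := by
          simp [pt, PiLp.add_apply, PiLp.smul_apply, smul_eq_mul]
        rw [h0]
        exact ⟨mul_nonneg ht.1 hX.le, by nlinarith [ht.1, ht.2]⟩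
      · show ((1 - t) • pt 0 h + t • pt X h) 1 = h
        have h0 : ((1 - t) • pt 0 h + t • pt X h) 1 = (1 - t) * h + t * h := by
          simp [pt, PiLp.add_apply, PiLp.smul_apply, smul_eq_mul]
        rw [h0]; ring
    · rintro ⟨⟨h1, h2⟩, h3⟩
      refine ⟨p 0 / X, ⟨div_nonneg h1 hX.le, (div_le_one hX).2 h2⟩, ?_⟩
      show (1 - p 0 / X) • pt 0 h + (p 0 / X) • pt X h = p
      have : (1 - p 0 / X) • pt 0 h + (p 0 / X) • pt X h = pt (p 0) h := by
        ext i; fin_cases i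
        · show (1 - p 0 / X) * 0 + (p 0 / X) * X = p 0
          field_simp; ring
        · show (1 - p 0 / X) * h + (p 0 / X) * h = h
          ring
      rw [this, ← h3, ← pt_eta]
  have hmeas : μH[1] (segment ℝ (pt 0 h) (pt X h)) = ENNReal.ofReal X := by
    rw [hausdorffMeasure_segment, edist_dist, dist_eq]
    congr 1
    have : (pt 0 h 0 - pt X h 0) ^ 2 + (pt 0 h 1 - pt X h 1) ^ 2 = X ^ 2 := by
      show ((0:ℝ) - X) ^ 2 + (h - h) ^ 2 = X ^ 2; ring
    rw [this, Real.sqrt_sq hX.le]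
  have hsub : T ⊆ segment ℝ (pt 0 h) (pt X h) := by
    rw [hseg]; rintro p ⟨h1, h2⟩; exact ⟨⟨h1.1.le, h1.2.le⟩, h2⟩
  have hsup : segment ℝ (pt 0 h) (pt X h) ⊆ T ∪ {pt 0 h, pt X h} := by
    rw [hseg]; rintro p ⟨⟨h1, h2⟩, h3⟩
    rcases eq_or_lt_of_le h1 with he | h1
    · right; left; rw [pt_eta p, ← he, h3]
    rcases eq_or_lt_of_le h2 with he | h2
    · right; right; rw [pt_eta p, he, h3]; rfl
    · exact Or.inl ⟨⟨h1, h2⟩, h3⟩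
  refine le_antisymm ?_ ?_
  · rw [← hmeas]; exact measure_mono hsub
  · calc ENNReal.ofReal X = μH[1] (segment ℝ (pt 0 h) (pt X h)) := hmeas.symm
      _ ≤ μH[1] (T ∪ {pt 0 h, pt X h}) := measure_mono hsup
      _ ≤ μH[1] T + μH[1] ({pt 0 h, pt X h} : Set E2) := measure_union_le _ _
      _ = μH[1] T := by
          have hz : μH[1] ({pt 0 h, pt X h} : Set E2) = 0 := by
            refine le_antisymm ?_ zero_le
            rw [insert_eq]
            calc μH[1] ({pt 0 h} ∪ {pt X h} : Set E2)
                ≤ μH[1] ({pt 0 h} : Set E2) + μH[1] ({pt X h} : Set E2) :=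
                  measure_union_le _ _
              _ = 0 := by simp
          rw [hz, add_zero]
def f (r θ : ℝ) : E2 := pt (r * Real.cos θ) (r * Real.sin θ)

lemma chord (r : ℝ) (hr : 0 ≤ r) (θ φ : ℝ) :
    dist (f r θ) (f r φ) = 2 * r * |Real.sin ((θ - φ) / 2)| := by
  rw [dist_eq]
  have h1 : Real.cos (θ - φ) = Real.cos θ * Real.cos φ + Real.sin θ * Real.sin φ :=
    Real.cos_sub θ φ
  have h2 : Real.sin ((θ - φ) / 2) ^ 2 = 1 / 2 - Real.cos (θ - φ) / 2 := by
    have := Real.sin_sq_eq_half_sub ((θ - φ) / 2)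
    rwa [show 2 * ((θ - φ) / 2) = θ - φ by ring] at this
  have hθ := Real.sin_sq_add_cos_sq θ
  have hφ := Real.sin_sq_add_cos_sq φ
  have habs : |Real.sin ((θ - φ) / 2)| ^ 2 = Real.sin ((θ - φ) / 2) ^ 2 := sq_abs _
  have key : (f r θ 0 - f r φ 0) ^ 2 + (f r θ 1 - f r φ 1) ^ 2
      = (2 * r * |Real.sin ((θ - φ) / 2)|) ^ 2 := by
    show (r * Real.cos θ - r * Real.cos φ) ^ 2 + (r * Real.sin θ - r * Real.sin φ) ^ 2 = _
    linear_combination r^2*hθ + r^2*hφ - 4*r^2*habs - 4*r^2*h2 + 2*r^2*h1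
  rw [key, Real.sqrt_sq (by positivity)]

lemma f_cont (r : ℝ) : Continuous (f r) := by
  have : f r = fun θ => He.symm (r * Real.cos θ, r * Real.sin θ) := by
    funext θ; exact (He.symm_apply_apply (f r θ)).symm
  rw [this]
  exact He.symm.continuous.comp (by continuity)

lemma f_injOn (r : ℝ) (hr : 0 < r) : InjOn (f r) (Icc 0 (π / 2)) := by
  intro a ha b hb hab
  have h1 : r * Real.sin a = r * Real.sin b := congrArg (fun p : E2 => p 1) hab
  have h2 : Real.sin a = Real.sin b := mul_left_cancel₀ hr.ne' h1
  have hpi := Real.pi_pos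
  exact Real.injOn_sin ⟨by linarith [ha.1], by linarith [ha.2]⟩
    ⟨by linarith [hb.1], by linarith [hb.2]⟩ h2


lemma f_lip (r : ℝ) (hr : 0 < r) : LipschitzWith r.toNNReal (f r) := by
  refine LipschitzWith.of_dist_le_mul fun a b => ?_
  rw [chord r hr.le, Real.coe_toNNReal r hr.le, Real.dist_eq]
  calc 2 * r * |Real.sin ((a - b) / 2)| ≤ 2 * r * |(a - b) / 2| :=
        mul_le_mul_of_nonneg_left (Real.abs_sin_le_abs) (by positivity)
    _ = r * |a - b| := by rw [abs_div, abs_two]; ring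

lemma npos_cast {n : ℕ} (hn : 1 ≤ n) : (0:ℝ) < n := by exact_mod_cast hn

lemma arc_Icc (r : ℝ) (hr : 0 < r) :
    μH[1] (f r '' Icc 0 (π / 2)) = ENNReal.ofReal (r * (π / 2)) := by
  have hpi := Real.pi_pos
  refine le_antisymm ?_ ?_
  · calc μH[1] (f r '' Icc 0 (π / 2))
        ≤ (r.toNNReal : ℝ≥0∞) ^ (1:ℝ) * μH[1] (Icc (0:ℝ) (π / 2)) :=
          (f_lip r hr).hausdorffMeasure_image_le zero_le_one _
      _ = ENNReal.ofReal r * ENNReal.ofReal (π / 2) := by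
          rw [ENNReal.rpow_one, hausdorffMeasure_real, Real.volume_Icc, sub_zero]
          rfl
      _ = ENNReal.ofReal (r * (π / 2)) := (ENNReal.ofReal_mul hr.le).symm
  · have key : ∀ n : ℕ, 1 ≤ n →
        ENNReal.ofReal (n * (2 * r * Real.sin (π / (4 * n)))) ≤ μH[1] (f r '' Icc 0 (π / 2)) := by
      intro n hn
      have hnpos : (0:ℝ) < n := npos_cast hn
      set Δ : ℝ := π / 2 / n with hΔ
      have hΔpos : 0 < Δ := by positivity
      have hnΔ : (n : ℝ) * Δ = π / 2 := by rw [hΔ]; field_simp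
      have hIco_sub : ∀ i : ℕ, i < n → Ico ((i:ℝ) * Δ) ((i + 1) * Δ) ⊆ Icc 0 (π / 2) := by
        intro i hi t ht
        have hi1 : ((i:ℝ) + 1) ≤ n := by exact_mod_cast hi
        constructor
        · exact le_trans (by positivity) ht.1
        · have : ((i:ℝ) + 1) * Δ ≤ (n:ℝ) * Δ := by nlinarith
          linarith [ht.2]
      have hIcc_sub : ∀ i : ℕ, i < n → Icc ((i:ℝ) * Δ) ((i + 1) * Δ) ⊆ Icc 0 (π / 2) := by
        intro i hi t ht
        have hi1 : ((i:ℝ) + 1) ≤ n := by exact_mod_cast hi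
        constructor
        · exact le_trans (by positivity) ht.1
        · have : ((i:ℝ) + 1) * Δ ≤ (n:ℝ) * Δ := by nlinarith
          linarith [ht.2]
      set P : ℕ → Set E2 := fun i => f r '' Ico ((i:ℝ) * Δ) ((i + 1) * Δ) with hP
      have hPIcc : ∀ i : ℕ, i < n →
          P i = f r '' Icc ((i:ℝ) * Δ) ((i + 1) * Δ) \ {f r (((i:ℝ) + 1) * Δ)} := by
        intro i hi
        have hiΔlt : (i:ℝ) * Δ < ((i:ℝ) + 1) * Δ := by nlinarith
        ext x
        constructor
        · rintro ⟨t, ht, rfl⟩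
          refine ⟨⟨t, ⟨ht.1, ht.2.le⟩, rfl⟩, ?_⟩
          intro hx
          have := f_injOn r hr (hIcc_sub i hi ⟨ht.1, ht.2.le⟩)
            (hIcc_sub i hi ⟨hiΔlt.le, le_refl _⟩) hx
          exact absurd this (ne_of_lt ht.2)
        · rintro ⟨⟨t, ht, rfl⟩, hx⟩
          refine ⟨t, ⟨ht.1, lt_of_le_of_ne ht.2 fun he => hx ?_⟩, rfl⟩
          rw [he]; exact rfl
      have hPmeas : ∀ i ∈ Finset.range n, MeasurableSet (P i) := by
        intro i hi
        rw [hPIcc i (Finset.mem_range.1 hi)]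
        exact ((isCompact_Icc.image (f_cont r)).measurableSet).diff (measurableSet_singleton _)
      have hdisj : (↑(Finset.range n) : Set ℕ).PairwiseDisjoint P := by
        intro i hi j hj hij
        have hd : Disjoint (Ico ((i:ℝ) * Δ) (((i:ℝ) + 1) * Δ))
            (Ico ((j:ℝ) * Δ) (((j:ℝ) + 1) * Δ)) := by
          rw [Set.Ico_disjoint_Ico]
          rcases hij.lt_or_gt with h | h
          · have h1 : (i:ℝ) + 1 ≤ j := by exact_mod_cast h
            have h2 : ((i:ℝ) + 1) * Δ ≤ (j:ℝ) * Δ := by nlinarith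
            exact le_trans (min_le_left _ _) (le_trans h2 (le_max_right _ _))
          · have h1 : (j:ℝ) + 1 ≤ i := by exact_mod_cast h
            have h2 : ((j:ℝ) + 1) * Δ ≤ (i:ℝ) * Δ := by nlinarith
            exact le_trans (min_le_right _ _) (le_trans h2 (le_max_left _ _))
        have hii := Finset.mem_range.1 hi
        have hjj := Finset.mem_range.1 hj
        have himg := (f_injOn r hr).image_inter
          (hIco_sub i hii) (hIco_sub j hjj)
        rw [Function.onFun, Set.disjoint_iff_inter_eq_empty, ← himg,
          Set.disjoint_iff_inter_eq_empty.1 hd, image_empty]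
      have hΔ2 : Δ / 2 = π / (4 * n) := by
        rw [hΔ, div_div, div_div, show 2 * ((n:ℝ) * 2) = 4 * n by ring]
      have hsinpos : 0 ≤ Real.sin (Δ / 2) := by
        apply Real.sin_nonneg_of_nonneg_of_le_pi (by positivity)
        have h1 : Δ ≤ π / 2 := by
          rw [hΔ]; exact div_le_self (by positivity) (by exact_mod_cast hn)
        linarith
      have hchord : ∀ i ∈ Finset.range n,
          ENNReal.ofReal (2 * r * Real.sin (Δ / 2)) ≤ μH[1] (P i) := by
        intro i hi'
        have hi := Finset.mem_range.1 hi'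
        have hle : (i:ℝ) * Δ ≤ ((i:ℝ) + 1) * Δ := by nlinarith
        have hconn : IsPreconnected (f r '' Icc ((i:ℝ) * Δ) (((i:ℝ) + 1) * Δ)) :=
          isPreconnected_Icc.image _ (f_cont r).continuousOn
        have hxy := ofReal_dist_le_hausdorff hconn
          (mem_image_of_mem _ (left_mem_Icc.2 hle)) (mem_image_of_mem _ (right_mem_Icc.2 hle))
        have hdist : dist (f r ((i:ℝ) * Δ)) (f r (((i:ℝ) + 1) * Δ)) = 2 * r * Real.sin (Δ / 2) := by
          rw [chord r hr.le]
          congr 1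
          rw [show ((i:ℝ) * Δ - ((i:ℝ) + 1) * Δ) / 2 = -(Δ / 2) by ring, Real.sin_neg,
            abs_neg, abs_of_nonneg hsinpos]
        rw [hdist] at hxy
        refine le_trans hxy ?_
        have hsub2 : f r '' Icc ((i:ℝ) * Δ) (((i:ℝ) + 1) * Δ)
            ⊆ P i ∪ {f r (((i:ℝ) + 1) * Δ)} := by
          rintro x ⟨t, ht, rfl⟩
          rcases eq_or_lt_of_le ht.2 with he | hlt
          · right; rw [he]; rfl
          · left; exact ⟨t, ⟨ht.1, hlt⟩, rfl⟩
        calc μH[1] (f r '' Icc ((i:ℝ) * Δ) (((i:ℝ) + 1) * Δ))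
            ≤ μH[1] (P i ∪ {f r (((i:ℝ) + 1) * Δ)}) := measure_mono hsub2
          _ ≤ μH[1] (P i) + μH[1] ({f r (((i:ℝ) + 1) * Δ)} : Set E2) := measure_union_le _ _
          _ = μH[1] (P i) := by rw [measure_singleton, add_zero]
      calc ENNReal.ofReal ((n:ℝ) * (2 * r * Real.sin (π / (4 * n))))
          = ∑ _i ∈ Finset.range n, ENNReal.ofReal (2 * r * Real.sin (Δ / 2)) := by
            rw [Finset.sum_const, Finset.card_range, nsmul_eq_mul, hΔ2,
              ← ENNReal.ofReal_natCast n, ← ENNReal.ofReal_mul (by positivity)]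
        _ ≤ ∑ i ∈ Finset.range n, μH[1] (P i) := Finset.sum_le_sum hchord
        _ = μH[1] (⋃ i ∈ Finset.range n, P i) := (measure_biUnion_finset hdisj hPmeas).symm
        _ ≤ μH[1] (f r '' Icc 0 (π / 2)) := by
            refine measure_mono (iUnion₂_subset fun i hi => ?_)
            exact (image_mono (hIco_sub i (Finset.mem_range.1 hi)))
    have hslope : Tendsto (fun x : ℝ => Real.sin x / x) (𝓝[≠] (0:ℝ)) (𝓝 1) := by
      have h := hasDerivAt_iff_tendsto_slope.1 (Real.hasDerivAt_sin 0)
      rw [Real.cos_zero] at h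
      refine h.congr' ?_
      filter_upwards with x
      rw [slope_def_field, Real.sin_zero, sub_zero, sub_zero]
    have hx : Tendsto (fun n : ℕ => π / (4 * (n:ℝ))) atTop (𝓝[≠] (0:ℝ)) := by
      rw [tendsto_nhdsWithin_iff]
      constructor
      · have heq : (fun n : ℕ => π / (4 * (n:ℝ))) = fun n : ℕ => (π / 4) / (n:ℝ) := by
          funext n; rw [div_div]
        rw [heq]
        exact tendsto_const_div_atTop_nhds_zero_nat _
      · filter_upwards [Filter.eventually_ge_atTop 1] with n hn
        have h0 : (0:ℝ) < n := npos_cast hn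
        have : (0:ℝ) < π / (4 * n) := by positivity
        exact this.ne'
    have hcomp := hslope.comp hx
    have hmul := hcomp.const_mul (2 * r * (π / 4))
    have hreal : Tendsto (fun n : ℕ => (n:ℝ) * (2 * r * Real.sin (π / (4 * n)))) atTop
        (𝓝 (r * (π / 2))) := by
      have hev : (fun n : ℕ => (2 * r * (π / 4)) *
            ((fun x : ℝ => Real.sin x / x) (π / (4 * (n:ℝ)))))
          =ᶠ[atTop] fun n : ℕ => (n:ℝ) * (2 * r * Real.sin (π / (4 * n))) := by
        filter_upwards [Filter.eventually_ge_atTop 1] with n hn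
        have hn0 : (0:ℝ) < n := npos_cast hn
        have hpne : π ≠ 0 := hpi.ne'
        field_simp
      have h2 : (2 * r * (π / 4)) * 1 = r * (π / 2) := by ring
      exact h2 ▸ hmul.congr' hev
    have htend := (ENNReal.continuous_ofReal.tendsto _).comp hreal
    exact le_of_tendsto htend (Filter.eventually_atTop.2 ⟨1, fun n hn => key n hn⟩)

lemma arc_Ioo (r : ℝ) (hr : 0 < r) :
    μH[1] (f r '' Ioo 0 (π / 2)) = ENNReal.ofReal (r * (π / 2)) := by
  refine le_antisymm ?_ ?_
  · rw [← arc_Icc r hr]; exact measure_mono (image_mono Ioo_subset_Icc_self)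
  · have hsub : f r '' Icc 0 (π / 2) ⊆ f r '' Ioo 0 (π / 2) ∪ {f r 0, f r (π / 2)} := by
      rintro x ⟨t, ht, rfl⟩
      rcases eq_or_lt_of_le ht.1 with he | h1
      · rw [← he]; exact mem_union_right _ (mem_insert _ _)
      rcases eq_or_lt_of_le ht.2 with he | h2
      · rw [he]; exact mem_union_right _ (mem_insert_of_mem _ rfl)
      · exact mem_union_left _ ⟨t, ⟨h1, h2⟩, rfl⟩
    have hz : μH[1] ({f r 0, f r (π / 2)} : Set E2) = 0 := by
      refine le_antisymm ?_ zero_le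
      rw [insert_eq]
      refine le_trans (measure_union_le _ _) ?_
      simp
    calc ENNReal.ofReal (r * (π / 2)) = μH[1] (f r '' Icc 0 (π / 2)) := (arc_Icc r hr).symm
      _ ≤ μH[1] (f r '' Ioo 0 (π / 2) ∪ {f r 0, f r (π / 2)}) := measure_mono hsub
      _ ≤ μH[1] (f r '' Ioo 0 (π / 2)) + μH[1] ({f r 0, f r (π / 2)} : Set E2) :=
          measure_union_le _ _
      _ = μH[1] (f r '' Ioo 0 (π / 2)) := by rw [hz, add_zero]
abbrev W := Fin 2 → ℝ



lemma volume_pi_box (a b : ℝ) :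
    volume {x : W | x 0 ∈ Icc 0 a ∧ x 1 ∈ Icc 0 b} = ENNReal.ofReal a * ENNReal.ofReal b := by
  have h : {x : W | x 0 ∈ Icc 0 a ∧ x 1 ∈ Icc 0 b}
      = Set.pi univ ![Icc 0 a, Icc 0 b] := by
    ext x
    simp [Set.mem_pi, Fin.forall_fin_two]
  rw [h, volume_pi_pi, Fin.prod_univ_two]
  simp [Real.volume_Icc]

lemma volume_box (a b : ℝ) :
    volume {p : E2 | p 0 ∈ Icc 0 a ∧ p 1 ∈ Icc 0 b} = ENNReal.ofReal a * ENNReal.ofReal b := by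
  have he := EuclideanSpace.volume_preserving_symm_measurableEquiv_toLp (Fin 2)
  have hm : MeasurableSet {x : W | x 0 ∈ Icc 0 a ∧ x 1 ∈ Icc 0 b} := by
    refine MeasurableSet.inter ?_ ?_
    · exact (measurable_pi_apply 0) measurableSet_Icc
    · exact (measurable_pi_apply 1) measurableSet_Icc
  have hpre : {p : E2 | p 0 ∈ Icc 0 a ∧ p 1 ∈ Icc 0 b}
      = (MeasurableEquiv.toLp 2 (Fin 2 → ℝ)).symm ⁻¹' {x : W | x 0 ∈ Icc 0 a ∧ x 1 ∈ Icc 0 b} := rfl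
  rw [hpre, he.measure_preimage hm.nullMeasurableSet, volume_pi_box]

lemma volume_quarter (r : ℝ) (hr : 0 < r) :
    volume {p : E2 | 0 ≤ p 0 ∧ 0 ≤ p 1 ∧ p 0 ^ 2 + p 1 ^ 2 ≤ r ^ 2}
      = ENNReal.ofReal (π * r ^ 2 / 4) := by
  have hpi := Real.pi_pos
  set B : Set W := {x : W | x 0 ^ 2 + x 1 ^ 2 ≤ r ^ 2} with hB
  set H0 : Set W := {x : W | 0 ≤ x 0} with hH0
  set H1 : Set W := {x : W | 0 ≤ x 1} with hH1
  have mB : MeasurableSet B :=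
    measurableSet_le (((measurable_pi_apply 0).pow_const 2).add
      ((measurable_pi_apply 1).pow_const 2)) measurable_const
  have mH0 : MeasurableSet H0 := measurableSet_le measurable_const (measurable_pi_apply 0)
  have mH1 : MeasurableSet H1 := measurableSet_le measurable_const (measurable_pi_apply 1)
  -- reflection in coordinate 0
  have hg0 : MeasurePreserving
      (fun x : W => fun i => (if i = 0 then (fun t : ℝ => -t) else id) (x i)) volume volume := by
    apply volume_preserving_pi
    intro i
    fin_cases i
    · simpa using Measure.measurePreserving_neg (volume : Measure ℝ)
    · simpa using MeasurePreserving.id (volume : Measure ℝ)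
  have hg1 : MeasurePreserving
      (fun x : W => fun i => (if i = 1 then (fun t : ℝ => -t) else id) (x i)) volume volume := by
    apply volume_preserving_pi
    intro i
    fin_cases i
    · simpa using MeasurePreserving.id (volume : Measure ℝ)
    · simpa using Measure.measurePreserving_neg (volume : Measure ℝ)
  have hpre0 : (fun x : W => fun i => (if i = 0 then (fun t : ℝ => -t) else id) (x i)) ⁻¹' (B ∩ H0)
      = B ∩ {x : W | x 0 ≤ 0} := by
    ext x
    simp only [hB, hH0, mem_preimage, mem_inter_iff, mem_setOf_eq]
    norm_num
  have hpre1 : (fun x : W => fun i => (if i = 1 then (fun t : ℝ => -t) else id) (x i)) ⁻¹' (B ∩ H0 ∩ H1)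
      = (B ∩ H0) ∩ {x : W | x 1 ≤ 0} := by
    ext x
    simp only [hB, hH0, hH1, mem_preimage, mem_inter_iff, mem_setOf_eq]
    norm_num
  have hsplit : ∀ (S : Set W) (i : Fin 2), MeasurableSet S →
      (∀ x ∈ S, True) → True := fun _ _ _ _ => trivial
  -- split 0
  have hv0 : volume (B ∩ {x : W | x 0 ≤ 0}) = volume (B ∩ H0) := by
    rw [← hpre0, hg0.measure_preimage (mB.inter mH0).nullMeasurableSet]
  have hunion0 : (B ∩ H0) ∪ (B ∩ {x : W | x 0 ≤ 0}) = B := by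
    ext x
    constructor
    · rintro (h | h) <;> exact h.1
    · intro h
      rcases le_total 0 (x 0) with h0 | h0
      · exact Or.inl ⟨h, h0⟩
      · exact Or.inr ⟨h, h0⟩
  have hinter0 : volume ((B ∩ H0) ∩ (B ∩ {x : W | x 0 ≤ 0})) = 0 := by
    refine measure_mono_null (fun x hx => ?_) (?_ : volume {x : W | x 0 = 0} = 0)
    · exact le_antisymm hx.2.2 hx.1.2
    · rw [volume_pi]; exact Measure.pi_hyperplane _ 0 0
  have h2v0 : volume B = 2 * volume (B ∩ H0) := by
    have hm0 : MeasurableSet (B ∩ {x : W | x 0 ≤ 0}) :=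
      mB.inter (measurableSet_le (measurable_pi_apply 0) measurable_const)
    have := measure_union_add_inter (μ := volume) (B ∩ H0) hm0
    rw [hunion0, hinter0, add_zero] at this
    rw [this, hv0, two_mul]
  -- split 1
  have hv1 : volume ((B ∩ H0) ∩ {x : W | x 1 ≤ 0}) = volume (B ∩ H0 ∩ H1) := by
    rw [← hpre1, hg1.measure_preimage ((mB.inter mH0).inter mH1).nullMeasurableSet]
  have hunion1 : (B ∩ H0 ∩ H1) ∪ ((B ∩ H0) ∩ {x : W | x 1 ≤ 0}) = B ∩ H0 := by
    ext x
    constructor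
    · rintro (h | h) <;> exact h.1
    · intro h
      rcases le_total 0 (x 1) with h0 | h0
      · exact Or.inl ⟨h, h0⟩
      · exact Or.inr ⟨h, h0⟩
  have hinter1 : volume ((B ∩ H0 ∩ H1) ∩ ((B ∩ H0) ∩ {x : W | x 1 ≤ 0})) = 0 := by
    refine measure_mono_null (fun x hx => ?_) (?_ : volume {x : W | x 1 = 0} = 0)
    · exact le_antisymm hx.2.2 hx.1.2
    · rw [volume_pi]; exact Measure.pi_hyperplane _ 1 0
  have h2v1 : volume (B ∩ H0) = 2 * volume (B ∩ H0 ∩ H1) := by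
    have hm1 : MeasurableSet ((B ∩ H0) ∩ {x : W | x 1 ≤ 0}) :=
      (mB.inter mH0).inter (measurableSet_le (measurable_pi_apply 1) measurable_const)
    have := measure_union_add_inter (μ := volume) (B ∩ H0 ∩ H1) hm1
    rw [hunion1, hinter1, add_zero] at this
    rw [this, hv1, two_mul]
  -- ball volume
  have hballset : {p : E2 | p 0 ^ 2 + p 1 ^ 2 ≤ r ^ 2} = closedBall (0 : E2) r := by
    ext p
    rw [mem_closedBall, dist_zero_right, mem_setOf_eq, norm_eq]
    rw [show p 0 ^ 2 + p 1 ^ 2 ≤ r ^ 2 ↔ Real.sqrt (p 0 ^ 2 + p 1 ^ 2) ≤ r from ?_]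
    constructor
    · intro h
      have := Real.sqrt_le_sqrt h
      rwa [Real.sqrt_sq hr.le] at this
    · intro h
      have := Real.sq_sqrt (by positivity : (0:ℝ) ≤ p 0 ^ 2 + p 1 ^ 2)
      nlinarith [Real.sqrt_nonneg (p 0 ^ 2 + p 1 ^ 2)]
  have hvolB : volume B = ENNReal.ofReal (π * r ^ 2) := by
    have he := EuclideanSpace.volume_preserving_symm_measurableEquiv_toLp (Fin 2)
    have hpre : {p : E2 | p 0 ^ 2 + p 1 ^ 2 ≤ r ^ 2}
        = (MeasurableEquiv.toLp 2 (Fin 2 → ℝ)).symm ⁻¹' B := rfl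
    have h1 : volume {p : E2 | p 0 ^ 2 + p 1 ^ 2 ≤ r ^ 2} = volume B := by
      rw [hpre, he.measure_preimage mB.nullMeasurableSet]
    rw [← h1, hballset, EuclideanSpace.volume_closedBall]
    rw [Fintype.card_fin]
    rw [show Real.sqrt π ^ 2 / Real.Gamma ((2:ℕ) / 2 + 1) = π from ?_]
    · rw [← ENNReal.ofReal_pow hr.le, ← ENNReal.ofReal_mul (by positivity)]
      rw [mul_comm]
    · rw [Real.sq_sqrt hpi.le]
      norm_num [Real.Gamma_two]
  -- assemble
  have hq : volume {p : E2 | 0 ≤ p 0 ∧ 0 ≤ p 1 ∧ p 0 ^ 2 + p 1 ^ 2 ≤ r ^ 2}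
      = volume (B ∩ H0 ∩ H1) := by
    have he := EuclideanSpace.volume_preserving_symm_measurableEquiv_toLp (Fin 2)
    have hpre : {p : E2 | 0 ≤ p 0 ∧ 0 ≤ p 1 ∧ p 0 ^ 2 + p 1 ^ 2 ≤ r ^ 2}
        = (MeasurableEquiv.toLp 2 (Fin 2 → ℝ)).symm ⁻¹' (B ∩ H0 ∩ H1) := by
      ext p
      simp only [hB, hH0, hH1, mem_preimage, mem_inter_iff, mem_setOf_eq]
      tauto
    rw [hpre, he.measure_preimage ((mB.inter mH0).inter mH1).nullMeasurableSet]
  rw [hq]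
  have h4 : volume B = 4 * volume (B ∩ H0 ∩ H1) := by
    rw [h2v0, h2v1, ← mul_assoc]
    norm_num
  have h4' : (4 : ℝ≥0∞) * volume (B ∩ H0 ∩ H1) = 4 * ENNReal.ofReal (π * r ^ 2 / 4) := by
    rw [← h4, hvolB, show (4:ℝ≥0∞) = ENNReal.ofReal 4 by norm_num,
      ← ENNReal.ofReal_mul (by norm_num)]
    congr 1
    ring
  exact (ENNReal.mul_right_inj (by norm_num) (by norm_num)).1 h4'

lemma convex_ge (i : Fin 2) (a : ℝ) : Convex ℝ {p : E2 | a ≤ p i} := by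
  intro x hx y hy s t hs ht hst
  simp only [mem_setOf_eq] at hx hy ⊢
  rw [smul_add_coord]
  have h1 : s * a ≤ s * x i := mul_le_mul_of_nonneg_left hx hs
  have h2 : t * a ≤ t * y i := mul_le_mul_of_nonneg_left hy ht
  have h3 : s * a + t * a = a := by rw [← add_mul, hst, one_mul]
  linarith

lemma convex_le (i : Fin 2) (a : ℝ) : Convex ℝ {p : E2 | p i ≤ a} := by
  intro x hx y hy s t hs ht hst
  simp only [mem_setOf_eq] at hx hy ⊢
  rw [smul_add_coord]
  have h1 : s * x i ≤ s * a := mul_le_mul_of_nonneg_left hx hs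
  have h2 : t * y i ≤ t * a := mul_le_mul_of_nonneg_left hy ht
  have h3 : s * a + t * a = a := by rw [← add_mul, hst, one_mul]
  linarith

lemma regular_closed {s : Set E2} (hconv : Convex ℝ s) (hcl : IsClosed s)
    (hne : (interior s).Nonempty) : s = closure (interior s) := by
  refine le_antisymm ?_ (closure_minimal interior_subset hcl)
  intro x hx
  obtain ⟨c, hc⟩ := hne
  have hcont : Continuous fun t : ℝ => t • c + (1 - t) • x := by continuity
  have hseq : Tendsto (fun t : ℝ => t • c + (1 - t) • x) (𝓝[>] (0:ℝ)) (𝓝 x) := by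
    have h0 : Tendsto (fun t : ℝ => t • c + (1 - t) • x) (𝓝 0) (𝓝 x) := by
      have := hcont.tendsto 0
      simpa using this
    exact h0.mono_left nhdsWithin_le_nhds
  refine mem_closure_of_tendsto hseq ?_
  filter_upwards [Ioo_mem_nhdsGT_of_mem (⟨le_refl (0:ℝ), one_pos⟩ : (0:ℝ) ∈ Ico (0:ℝ) 1)]
    with t ht
  exact hconv.combo_interior_closure_mem_interior hc (subset_closure hx) ht.1
    (by linarith [ht.2]) (by ring)

lemma isClosed_box (a b : ℝ) : IsClosed {p : E2 | p 0 ∈ Icc 0 a ∧ p 1 ∈ Icc 0 b} := by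
  have h1 : {p : E2 | p 0 ∈ Icc 0 a ∧ p 1 ∈ Icc 0 b} = He ⁻¹' (Icc 0 a ×ˢ Icc 0 b) := rfl
  rw [h1]
  exact (isClosed_Icc.prod isClosed_Icc).preimage He.continuous

lemma interior_box (a b : ℝ) : interior {p : E2 | p 0 ∈ Icc 0 a ∧ p 1 ∈ Icc 0 b}
    = {p : E2 | p 0 ∈ Ioo 0 a ∧ p 1 ∈ Ioo 0 b} := by
  have h1 : {p : E2 | p 0 ∈ Icc 0 a ∧ p 1 ∈ Icc 0 b} = He ⁻¹' (Icc 0 a ×ˢ Icc 0 b) := rfl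
  rw [h1, ← Homeomorph.preimage_interior, interior_prod_eq, interior_Icc, interior_Icc]
  rfl

lemma interior_ge0 (a : ℝ) : interior {p : E2 | a ≤ p 0} = {p : E2 | a < p 0} := by
  have h1 : {p : E2 | a ≤ p 0} = He ⁻¹' (Ici a ×ˢ (univ : Set ℝ)) := by
    ext p; simp [He_preimage]
  have h2 : {p : E2 | a < p 0} = He ⁻¹' (Ioi a ×ˢ (univ : Set ℝ)) := by
    ext p; simp [He_preimage]
  rw [h1, h2, ← Homeomorph.preimage_interior, interior_prod_eq, interior_Ici, interior_univ]

lemma interior_ge1 (a : ℝ) : interior {p : E2 | a ≤ p 1} = {p : E2 | a < p 1} := by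
  have h1 : {p : E2 | a ≤ p 1} = He ⁻¹' ((univ : Set ℝ) ×ˢ Ici a) := by
    ext p; simp [He_preimage]
  have h2 : {p : E2 | a < p 1} = He ⁻¹' ((univ : Set ℝ) ×ˢ Ioi a) := by
    ext p; simp [He_preimage]
  rw [h1, h2, ← Homeomorph.preimage_interior, interior_prod_eq, interior_Ici, interior_univ]

lemma ball_set_eq (r : ℝ) (hr : 0 < r) :
    {p : E2 | p 0 ^ 2 + p 1 ^ 2 ≤ r ^ 2} = closedBall (0 : E2) r := by
  ext p
  rw [mem_closedBall, dist_zero_right, mem_setOf_eq, norm_eq]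
  constructor
  · intro h
    have := Real.sqrt_le_sqrt h
    rwa [Real.sqrt_sq hr.le] at this
  · intro h
    have h2 := Real.sq_sqrt (by positivity : (0:ℝ) ≤ p 0 ^ 2 + p 1 ^ 2)
    nlinarith [Real.sqrt_nonneg (p 0 ^ 2 + p 1 ^ 2)]

lemma ball_set_eq_open (r : ℝ) (hr : 0 < r) :
    {p : E2 | p 0 ^ 2 + p 1 ^ 2 < r ^ 2} = ball (0 : E2) r := by
  ext p
  rw [mem_ball, dist_zero_right, mem_setOf_eq, norm_eq]
  constructor
  · intro h
    have h1 : Real.sqrt (p 0 ^ 2 + p 1 ^ 2) < Real.sqrt (r ^ 2) :=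
      (Real.sqrt_lt_sqrt (by positivity) h)
    rwa [Real.sqrt_sq hr.le] at h1
  · intro h
    have h2 := Real.sq_sqrt (by positivity : (0:ℝ) ≤ p 0 ^ 2 + p 1 ^ 2)
    nlinarith [Real.sqrt_nonneg (p 0 ^ 2 + p 1 ^ 2)]

lemma arc_param (r : ℝ) (hr : 0 < r) :
    {p : E2 | 0 < p 0 ∧ 0 < p 1 ∧ p 0 ^ 2 + p 1 ^ 2 = r ^ 2} = f r '' Ioo 0 (π / 2) := by
  have hpi := Real.pi_pos
  ext p
  constructor
  · rintro ⟨h0, h1, hsum⟩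
    have hp1r : p 1 < r := by nlinarith
    have hx0 : 0 < p 1 / r := div_pos h1 hr
    have hx1 : p 1 / r < 1 := (div_lt_one hr).2 hp1r
    refine ⟨Real.arcsin (p 1 / r), ⟨Real.arcsin_pos.2 hx0, Real.arcsin_lt_pi_div_two.2 hx1⟩, ?_⟩
    have hsin : Real.sin (Real.arcsin (p 1 / r)) = p 1 / r :=
      Real.sin_arcsin (by linarith) hx1.le
    have hcos : Real.cos (Real.arcsin (p 1 / r)) = Real.sqrt (1 - (p 1 / r) ^ 2) :=
      Real.cos_arcsin _
    have h1r : 1 - (p 1 / r) ^ 2 = (p 0 / r) ^ 2 := by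
      field_simp
      linarith
    have hc : r * Real.cos (Real.arcsin (p 1 / r)) = p 0 := by
      rw [hcos, h1r, Real.sqrt_sq (by positivity), mul_comm, div_mul_cancel₀ _ hr.ne']
    have hs : r * Real.sin (Real.arcsin (p 1 / r)) = p 1 := by
      rw [hsin, mul_comm, div_mul_cancel₀ _ hr.ne']
    show pt (r * Real.cos (Real.arcsin (p 1 / r))) (r * Real.sin (Real.arcsin (p 1 / r))) = p
    rw [hc, hs, ← pt_eta]
  · rintro ⟨θ, hθ, rfl⟩
    have hcos : 0 < Real.cos θ := Real.cos_pos_of_mem_Ioo ⟨by linarith [hθ.1], hθ.2⟩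
    have hsin : 0 < Real.sin θ := Real.sin_pos_of_pos_of_lt_pi hθ.1 (by linarith [hθ.2])
    refine ⟨mul_pos hr hcos, mul_pos hr hsin, ?_⟩
    have hpyth := Real.sin_sq_add_cos_sq θ
    show (r * Real.cos θ) ^ 2 + (r * Real.sin θ) ^ 2 = r ^ 2
    nlinarith [hpyth]

end FP

open FP

/-- **Theorem 2, sharpness.**
Let `0 < X ≤ Y` and `D` the closed `X × Y` rectangle.  For every area `A` with
`0 < A ≤ X·Y/2` there exists a compact, connected, regular closed `S ⊆ D` of
area `A` whose free perimeter relative to `D` equals `min X (√(π·A))`. -/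
theorem free_perimeter_sharp_small_area
    (X Y A : ℝ) (hX : 0 < X) (hXY : X ≤ Y) (hA : 0 < A) (hAhalf : A ≤ X * Y / 2)
    (D : Set (EuclideanSpace ℝ (Fin 2)))
    (hD : D = {p : EuclideanSpace ℝ (Fin 2) | p 0 ∈ Set.Icc 0 X ∧ p 1 ∈ Set.Icc 0 Y}) :
    ∃ S : Set (EuclideanSpace ℝ (Fin 2)),
      S ⊆ D ∧ IsCompact S ∧ IsConnected S ∧ S = closure (interior S) ∧
      volume S = ENNReal.ofReal A ∧
      μH[1] (frontier S \ frontier D) =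
        ENNReal.ofReal (min X (Real.sqrt (Real.pi * A))) := by
  subst hD
  have hY : 0 < Y := lt_of_lt_of_le hX hXY
  have hpi := Real.pi_pos
  rcases le_total X (Real.sqrt (Real.pi * A)) with hcase | hcase
  · -- rectangular strip of height h = A / X
    set h : ℝ := A / X with hh
    have hhpos : 0 < h := div_pos hA hX
    have hhY : h < Y := by
      rw [hh, div_lt_iff₀ hX]
      nlinarith
    have hXh : X * h = A := by rw [hh]; field_simp
    set S : Set E2 := {p : E2 | p 0 ∈ Icc 0 X ∧ p 1 ∈ Icc 0 h} with hS
    have hconv : Convex ℝ S := by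
      have he : S = ({p : E2 | 0 ≤ p 0} ∩ {p : E2 | p 0 ≤ X})
          ∩ ({p : E2 | 0 ≤ p 1} ∩ {p : E2 | p 1 ≤ h}) := rfl
      rw [he]
      exact ((convex_ge 0 0).inter (convex_le 0 X)).inter
        ((convex_ge 1 0).inter (convex_le 1 h))
    have h0mem : (0 : E2) ∈ S := by
      constructor
      · constructor
        · exact le_refl _
        · exact hX.le
      · constructor
        · exact le_refl _
        · exact hhpos.le
    have hclosed : IsClosed S := isClosed_box X h
    have hintne : (interior S).Nonempty := by
      refine ⟨pt (X / 2) (h / 2), ?_⟩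
      rw [hS, interior_box]
      exact ⟨⟨half_pos hX, half_lt_self hX⟩, ⟨half_pos hhpos, half_lt_self hhpos⟩⟩
    refine ⟨S, ?_, ?_, ?_, ?_, ?_, ?_⟩
    · rintro p ⟨h1, h2⟩
      exact ⟨h1, ⟨h2.1, le_trans h2.2 hhY.le⟩⟩
    · refine IsCompact.of_isClosed_subset (isCompact_closedBall (0 : E2) (X + h)) hclosed ?_
      rintro p ⟨h1, h2⟩
      rw [mem_closedBall, dist_zero_right, norm_eq]
      have hb : p 0 ^ 2 + p 1 ^ 2 ≤ (X + h) ^ 2 := by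
        nlinarith [h1.1, h1.2, h2.1, h2.2]
      calc Real.sqrt (p 0 ^ 2 + p 1 ^ 2) ≤ Real.sqrt ((X + h) ^ 2) := Real.sqrt_le_sqrt hb
        _ = X + h := Real.sqrt_sq (by positivity)
    · exact ⟨⟨0, h0mem⟩, hconv.isPreconnected⟩
    · exact regular_closed hconv hclosed hintne
    · rw [hS, volume_box, ← ENNReal.ofReal_mul hX.le, hXh]
    · have hfr : frontier S \ frontier {p : E2 | p 0 ∈ Icc 0 X ∧ p 1 ∈ Icc 0 Y}
          = {p : E2 | p 0 ∈ Ioo 0 X ∧ p 1 = h} := by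
        rw [hclosed.frontier_eq, (isClosed_box X Y).frontier_eq, hS, interior_box, interior_box]
        ext p
        constructor
        · rintro ⟨⟨hSp, hnotint⟩, hnotfrD⟩
          have hpD : p 0 ∈ Icc 0 X ∧ p 1 ∈ Icc 0 Y :=
            ⟨hSp.1, ⟨hSp.2.1, le_trans hSp.2.2 hhY.le⟩⟩
          have hintD : p 0 ∈ Ioo 0 X ∧ p 1 ∈ Ioo 0 Y := by
            by_contra hc
            exact hnotfrD ⟨hpD, hc⟩
          have hp1 : p 1 = h := by
            rcases eq_or_lt_of_le hSp.2.2 with heq | hlt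
            · exact heq
            · exact absurd ⟨hintD.1, ⟨hintD.2.1, hlt⟩⟩ hnotint
          exact ⟨hintD.1, hp1⟩
        · rintro ⟨h0, h1⟩
          refine ⟨⟨⟨⟨h0.1.le, h0.2.le⟩, ?_⟩, ?_⟩, ?_⟩
          · rw [h1]; exact ⟨hhpos.le, le_refl h⟩
          · intro hint
            exact absurd (h1 ▸ hint.2.2) (lt_irrefl h)
          · intro hfd
            exact hfd.2 ⟨h0, by rw [h1]; exact ⟨hhpos, hhY⟩⟩
      rw [hfr, hausdorff_open_horiz X h hX, min_eq_left hcase]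
  · -- quarter disc of radius r at the corner
    set r : ℝ := 2 * Real.sqrt (A / Real.pi) with hrdef
    have hrpos : 0 < r := by positivity
    have hrsq : r ^ 2 = 4 * (A / Real.pi) := by
      rw [hrdef, mul_pow, Real.sq_sqrt (by positivity)]; ring
    have hsqrtmul : Real.sqrt (A / Real.pi) * Real.pi = Real.sqrt (Real.pi * A) := by
      rw [show Real.pi = Real.sqrt (Real.pi ^ 2) from (Real.sqrt_sq hpi.le).symm]
      rw [Real.sqrt_sq hpi.le, ← Real.sqrt_sq hpi.le, ← Real.sqrt_mul (by positivity)]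
      congr 1
      field_simp
      rw [Real.sq_sqrt (sq_nonneg _)]
    have hrpi : r * (π / 2) = Real.sqrt (Real.pi * A) := by
      rw [hrdef, show 2 * Real.sqrt (A / Real.pi) * (π / 2) = Real.sqrt (A / Real.pi) * π by ring]
      exact hsqrtmul
    have hrX : r < X := by
      have h2 : r * π = 2 * Real.sqrt (Real.pi * A) := by
        rw [← hrpi]; ring
      nlinarith [Real.pi_gt_three, hcase, hX, Real.sqrt_nonneg (Real.pi * A)]
    set S : Set E2 := {p : E2 | 0 ≤ p 0 ∧ 0 ≤ p 1 ∧ p 0 ^ 2 + p 1 ^ 2 ≤ r ^ 2} with hS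
    have hcoordr : ∀ p ∈ S, p 0 ≤ r ∧ p 1 ≤ r := by
      rintro p ⟨h0, h1, hsum⟩
      constructor <;> nlinarith
    have hSeq : S = closedBall (0 : E2) r ∩ ({p : E2 | 0 ≤ p 0} ∩ {p : E2 | 0 ≤ p 1}) := by
      rw [← ball_set_eq r hrpos]
      ext p
      simp only [mem_inter_iff, mem_setOf_eq, hS]
      tauto
    have hcont0 : Continuous fun p : E2 => p 0 := continuous_fst.comp He.continuous
    have hcont1 : Continuous fun p : E2 => p 1 := continuous_snd.comp He.continuous
    have hclosed : IsClosed S := by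
      rw [hSeq]
      exact Metric.isClosed_closedBall.inter
        ((isClosed_le continuous_const hcont0).inter (isClosed_le continuous_const hcont1))
    have hconv : Convex ℝ S := by
      rw [hSeq]
      exact (convex_closedBall _ _).inter ((convex_ge 0 0).inter (convex_ge 1 0))
    have hintS : interior S = ball (0 : E2) r ∩ ({p : E2 | 0 < p 0} ∩ {p : E2 | 0 < p 1}) := by
      rw [hSeq, interior_inter, interior_inter, interior_closedBall _ hrpos.ne',
        interior_ge0, interior_ge1]
    have hcmem : pt (r / 2) (r / 2) ∈ interior S := by
      rw [hintS]
      refine ⟨?_, ⟨half_pos hrpos, half_pos hrpos⟩⟩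
      rw [← ball_set_eq_open r hrpos]
      show (r / 2) ^ 2 + (r / 2) ^ 2 < r ^ 2
      nlinarith
    have hintne : (interior S).Nonempty := ⟨_, hcmem⟩
    refine ⟨S, ?_, ?_, ?_, ?_, ?_, ?_⟩
    · rintro p hp
      obtain ⟨hr0, hr1⟩ := hcoordr p hp
      exact ⟨⟨hp.1, le_trans hr0 hrX.le⟩, ⟨hp.2.1, le_trans hr1 (lt_of_lt_of_le hrX hXY).le⟩⟩
    · refine IsCompact.of_isClosed_subset (isCompact_closedBall (0 : E2) r) hclosed ?_
      intro p hp
      rw [← ball_set_eq r hrpos]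
      exact hp.2.2
    · exact ⟨⟨_, interior_subset hcmem⟩, hconv.isPreconnected⟩
    · exact regular_closed hconv hclosed hintne
    · rw [hS, volume_quarter r hrpos]
      congr 1
      rw [hrsq]
      field_simp
    · have hfr : frontier S \ frontier {p : E2 | p 0 ∈ Icc 0 X ∧ p 1 ∈ Icc 0 Y}
          = {p : E2 | 0 < p 0 ∧ 0 < p 1 ∧ p 0 ^ 2 + p 1 ^ 2 = r ^ 2} := by
        rw [hclosed.frontier_eq, (isClosed_box X Y).frontier_eq, hintS, interior_box]
        ext p
        constructor
        · rintro ⟨⟨hSp, hnotint⟩, hnotfrD⟩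
          obtain ⟨hr0, hr1⟩ := hcoordr p hSp
          have hpD : p 0 ∈ Icc 0 X ∧ p 1 ∈ Icc 0 Y :=
            ⟨⟨hSp.1, le_trans hr0 hrX.le⟩, ⟨hSp.2.1, le_trans hr1 (lt_of_lt_of_le hrX hXY).le⟩⟩
          have hintD : p 0 ∈ Ioo 0 X ∧ p 1 ∈ Ioo 0 Y := by
            by_contra hc
            exact hnotfrD ⟨hpD, hc⟩
          refine ⟨hintD.1.1, hintD.2.1, ?_⟩
          rcases eq_or_lt_of_le hSp.2.2 with heq | hlt
          · exact heq
          · exfalso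
            apply hnotint
            refine ⟨?_, ⟨hintD.1.1, hintD.2.1⟩⟩
            rw [← ball_set_eq_open r hrpos]
            exact hlt
        · rintro ⟨h0, h1, hsum⟩
          have hmem : p ∈ S := ⟨h0.le, h1.le, hsum.le⟩
          obtain ⟨hr0, hr1⟩ := hcoordr p hmem
          refine ⟨⟨hmem, ?_⟩, ?_⟩
          · intro hint
            have : p ∈ {p : E2 | p 0 ^ 2 + p 1 ^ 2 < r ^ 2} := by
              rw [ball_set_eq_open r hrpos]
              exact hint.1
            exact absurd hsum (ne_of_lt this)
          · intro hfd
            exact hfd.2 ⟨⟨h0, lt_of_le_of_lt hr0 hrX⟩,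
              ⟨h1, lt_of_le_of_lt hr1 (lt_of_lt_of_le hrX hXY)⟩⟩
      rw [hfr, arc_param r hrpos, arc_Ioo r hrpos, hrpi, min_eq_right hcase]
end
end
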